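/- Let 0 < θ < β < π/2. Let Γ₁ be the contour consisting of the segments from cos(β)e^{iβ} to 0 and from 0 to cos(β)e^{-iβ}. Then the distance from Γ₁ to the set Σ_θ \ Δ_θ is strictly positive, where Σ_θ is the open sector of half-angle θ around the positive real axis and Δ_θ = 1 - B_θ with B_θ the Stolz domain of angle θ. -/

import Mathlib

open Complex

def stolzDomain (γ : ℝ) : Set ℂ :=
  interior (convexHull ℝ ({1} ∪ Metric.closedBall (0:ℂ) (Real.sin γ)))

def reflStolz (γ : ℝ) : Set ℂ := (fun z => 1 - z) '' stolzDomain γ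

def sector (θ : ℝ) : Set ℂ := {z : ℂ | z ≠ 0 ∧ |z.arg| < θ}

/-- The contour `Γ₁`: the two segments joining `cos β · e^{iβ}` to `0` and `0` to
`cos β · e^{-iβ}`. -/
def gammaOne (β : ℝ) : Set ℂ :=
  {z : ℂ | ∃ t ∈ Set.Icc (0:ℝ) 1, z = (t:ℂ) * (Real.cos β : ℂ) * Complex.exp (I * β)} ∪
  {z : ℂ | ∃ t ∈ Set.Icc (0:ℝ) 1, z = (t:ℂ) * (Real.cos β : ℂ) * Complex.exp (-(I * β))}

lemma small_mem_reflStolz {θ : ℝ} (h1 : 0 < θ) (h2 : θ < Real.pi / 2) {w : ℂ}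
    (hw : w ∈ sector θ) (hsmall : ‖w‖ < Real.cos θ) : w ∈ reflStolz θ := by
  obtain ⟨hw0, hargw⟩ := hw
  set φ := w.arg with hφ
  have hφlt : |φ| < θ := hargw
  have hθπ : θ ≤ Real.pi := by linarith [Real.pi_pos]
  have hcos : Real.cos θ < Real.cos |φ| := Real.cos_lt_cos_of_nonneg_of_le_pi (abs_nonneg φ) hθπ hφlt
  have hcosθpos : 0 < Real.cos θ := Real.cos_pos_of_mem_Ioo ⟨by linarith, h2⟩
  have hcosφpos : 0 < Real.cos φ := by rw [← Real.cos_abs]; linarith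
  have habs : 0 < ‖w‖ := norm_pos_iff.mpr hw0
  set s : ℝ := ‖w‖ / Real.cos φ with hs
  have hspos : 0 < s := by positivity
  have hsle : s < 1 := by
    rw [hs, div_lt_one hcosφpos, ← Real.cos_abs]
    linarith
  set u : ℂ := 1 - (s⁻¹ : ℝ) • w with hu
  -- compute u
  have hwexp : (‖w‖ : ℂ) * Complex.exp (φ * I) = w := Complex.norm_mul_exp_arg_mul_I w
  have hueq : u = (Real.sin φ : ℂ) * ((Real.sin φ : ℂ) - (Real.cos φ : ℂ) * I) := by
    rw [hu, Complex.real_smul, ← hwexp, Complex.exp_mul_I]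
    push_cast
    have : ((‖w‖ : ℝ) : ℂ) ≠ 0 := by exact_mod_cast habs.ne'
    have hC : (Complex.cos φ) = ((Real.cos φ : ℝ) : ℂ) := by rw [Complex.ofReal_cos]
    have hS : (Complex.sin φ) = ((Real.sin φ : ℝ) : ℂ) := by rw [Complex.ofReal_sin]
    rw [hC, hS]
    have hc0 : ((Real.cos φ : ℝ) : ℂ) ≠ 0 := by exact_mod_cast hcosφpos.ne'
    have key : ((s : ℝ) : ℂ)⁻¹ * ((‖w‖ : ℝ) : ℂ) = ((Real.cos φ : ℝ) : ℂ) := by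
      rw [hs]; push_cast; field_simp
    have hsc : ((Real.sin φ : ℝ) : ℂ) ^ 2 + ((Real.cos φ : ℝ) : ℂ) ^ 2 = 1 := by
      exact_mod_cast Real.sin_sq_add_cos_sq φ
    linear_combination (-(((Real.cos φ : ℝ) : ℂ) + ((Real.sin φ : ℝ) : ℂ) * I)) * key - hsc
  -- abs u = |sin φ|
  have habsu : ‖u‖ = |Real.sin φ| := by
    rw [hueq, norm_mul, Complex.norm_real, Real.norm_eq_abs]
    have h1 : ‖(Real.sin φ : ℂ) - (Real.cos φ : ℂ) * I‖ = 1 := by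
      have hmk : (Real.sin φ : ℂ) - (Real.cos φ : ℂ) * I = ⟨Real.sin φ, -Real.cos φ⟩ := by
        apply Complex.ext <;> simp [Complex.sin_ofReal_re, Complex.cos_ofReal_re]
      rw [hmk, Complex.norm_def, Complex.normSq_mk, Real.sqrt_eq_one]
      nlinarith [Real.sin_sq_add_cos_sq φ]
    rw [h1, mul_one]
  have hsinlt : |Real.sin φ| < Real.sin θ := by
    rw [abs_lt]
    constructor
    · have := Real.sin_lt_sin_of_lt_of_le_pi_div_two (x := -θ) (y := φ)
        (by linarith) (by cases abs_lt.mp hφlt; linarith) (by cases abs_lt.mp hφlt; linarith)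
      rw [Real.sin_neg] at this; linarith
    · exact Real.sin_lt_sin_of_lt_of_le_pi_div_two
        (by cases abs_lt.mp hφlt; linarith) h2.le (by cases abs_lt.mp hφlt; linarith)
  -- u is in the interior of the hull
  have hball : Metric.ball (0:ℂ) (Real.sin θ) ⊆
      interior (convexHull ℝ ({1} ∪ Metric.closedBall (0:ℂ) (Real.sin θ))) := by
    apply interior_maximal _ Metric.isOpen_ball
    exact (Metric.ball_subset_closedBall.trans Set.subset_union_right).trans
      (subset_convexHull ℝ _)
  have huint : u ∈ interior (convexHull ℝ ({1} ∪ Metric.closedBall (0:ℂ) (Real.sin θ))) := by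
    apply hball
    rw [Metric.mem_ball, dist_zero_right, habsu]
    exact hsinlt
  have hone : (1:ℂ) ∈ convexHull ℝ ({1} ∪ Metric.closedBall (0:ℂ) (Real.sin θ)) :=
    subset_convexHull ℝ _ (Set.mem_union_left _ rfl)
  have hcombo : s • u + (1 - s) • (1:ℂ) ∈ stolzDomain θ := by
    exact (convex_convexHull ℝ _).combo_interior_self_mem_interior huint hone hspos
      (by linarith) (by ring)
  have heq : s • u + (1 - s) • (1:ℂ) = 1 - w := by
    rw [hu, Complex.real_smul, Complex.real_smul, Complex.real_smul]
    push_cast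
    have hs0 : (s:ℂ) ≠ 0 := by exact_mod_cast hspos.ne'
    field_simp
    ring
  refine ⟨1 - w, ?_, by ring⟩
  rw [← heq]
  exact hcombo

lemma not_mem_closure_sector {θ : ℝ} {z : ℂ} (hre : 0 < z.re) (h : θ < |z.arg|) :
    z ∉ closure (sector θ) := by
  intro hz
  haveI : (nhdsWithin z (sector θ)).NeBot := mem_closure_iff_nhdsWithin_neBot.mp hz
  have hc : ContinuousAt Complex.arg z := Complex.continuousAt_arg (Or.inl hre)
  have ht : Filter.Tendsto (fun w => |Complex.arg w|) (nhdsWithin z (sector θ))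
      (nhds |z.arg|) := (hc.abs.tendsto).mono_left nhdsWithin_le_nhds
  have hle : |z.arg| ≤ θ :=
    le_of_tendsto ht (Filter.eventually_inf_principal.mpr
      (Filter.Eventually.of_forall fun w hw => hw.2.le))
  linarith

lemma gamma_point_arg {β t : ℝ} (hβ1 : 0 < β) (hβ2 : β < Real.pi / 2) (ht : 0 < t) :
    ((t:ℂ) * (Real.cos β : ℂ) * Complex.exp (I * β)).arg = β ∧
      0 < ((t:ℂ) * (Real.cos β : ℂ) * Complex.exp (I * β)).re := by
  have hcos : 0 < Real.cos β := Real.cos_pos_of_mem_Ioo ⟨by linarith, hβ2⟩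
  have hz : (t:ℂ) * (Real.cos β : ℂ) * Complex.exp (I * β)
      = ((t * Real.cos β : ℝ) : ℂ) * ((Real.cos β : ℂ) + (Real.sin β : ℂ) * I) := by
    rw [mul_comm I (β:ℂ), Complex.exp_mul_I]
    push_cast [Complex.ofReal_cos, Complex.ofReal_sin]
    ring_nf
  have htc : 0 < t * Real.cos β := by positivity
  constructor
  · rw [hz, Complex.arg_real_mul _ htc, Complex.ofReal_cos, Complex.ofReal_sin]
    exact Complex.arg_cos_add_sin_mul_I (θ := β) ⟨by linarith [Real.pi_pos], by linarith [Real.pi_pos]⟩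
  · rw [hz]
    have hre : (((t * Real.cos β : ℝ) : ℂ) * ((Real.cos β : ℂ) + (Real.sin β : ℂ) * I)).re
        = (t * Real.cos β) * Real.cos β := by simp [Complex.cos_ofReal_re, Complex.sin_ofReal_re]
    rw [hre]
    positivity

lemma gamma_point_arg' {β t : ℝ} (hβ1 : 0 < β) (hβ2 : β < Real.pi / 2) (ht : 0 < t) :
    ((t:ℂ) * (Real.cos β : ℂ) * Complex.exp (-(I * β))).arg = -β ∧
      0 < ((t:ℂ) * (Real.cos β : ℂ) * Complex.exp (-(I * β))).re := by
  have h := gamma_point_arg hβ1 hβ2 ht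
  have hexpconj : starRingEnd ℂ (Complex.exp (I * β)) = Complex.exp (-(I * β)) := by
    rw [← Complex.exp_conj, map_mul, Complex.conj_I, Complex.conj_ofReal, neg_mul]
  have hconj : ((t:ℂ) * (Real.cos β : ℂ) * Complex.exp (-(I * β)))
      = starRingEnd ℂ ((t:ℂ) * (Real.cos β : ℂ) * Complex.exp (I * β)) := by
    rw [map_mul, map_mul, hexpconj, Complex.conj_ofReal, Complex.conj_ofReal]
  constructor
  · rw [hconj, Complex.arg_conj]
    have harg := h.1
    have : ((t:ℂ) * (Real.cos β : ℂ) * Complex.exp (I * β)).arg ≠ Real.pi := by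
      rw [harg]; intro hc; linarith [Real.pi_pos]
    rw [if_neg this, harg]
  · rw [hconj, Complex.conj_re]; exact h.2

lemma gammaOne_compact (β : ℝ) : IsCompact (gammaOne β) := by
  have h1 : {z : ℂ | ∃ t ∈ Set.Icc (0:ℝ) 1, z = (t:ℂ) * (Real.cos β : ℂ) * Complex.exp (I * β)}
      = (fun t : ℝ => (t:ℂ) * (Real.cos β : ℂ) * Complex.exp (I * β)) '' Set.Icc 0 1 := by
    ext z; simp [eq_comm, Set.mem_image]
  have h2 : {z : ℂ | ∃ t ∈ Set.Icc (0:ℝ) 1, z = (t:ℂ) * (Real.cos β : ℂ) * Complex.exp (-(I * β))}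
      = (fun t : ℝ => (t:ℂ) * (Real.cos β : ℂ) * Complex.exp (-(I * β))) '' Set.Icc 0 1 := by
    ext z; simp [eq_comm, Set.mem_image]
  rw [gammaOne, h1, h2]
  exact (isCompact_Icc.image (by continuity)).union (isCompact_Icc.image (by continuity))

/-- For `0 < θ < β < π/2`, the distance from the contour `Γ₁` (of opening `β`) to the set
`Σ_θ \ Δ_θ` is strictly positive. -/
theorem stmt6 (θ β : ℝ) (h1 : 0 < θ) (h2 : θ < β) (h3 : β < Real.pi / 2) :
    ∃ δ > (0:ℝ), ∀ z ∈ gammaOne β, ∀ w ∈ sector θ \ reflStolz θ, δ ≤ dist z w := by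
  set S := sector θ \ reflStolz θ with hSdef
  by_cases hS : S.Nonempty
  · -- every point of gammaOne is not in closure S
    have hβpos : 0 < β := h1.trans h2
    have hcosθpos : 0 < Real.cos θ := Real.cos_pos_of_mem_Ioo ⟨by linarith, by linarith⟩
    have hnot : ∀ z ∈ gammaOne β, z ∉ closure S := by
      intro z hz hcl
      have hsub : closure S ⊆ closure (sector θ) := closure_mono Set.diff_subset
      rcases hz with hz | hz <;> obtain ⟨t, ht, rfl⟩ := hz
      · rcases eq_or_lt_of_le ht.1 with hteq | htpos
        · -- z = 0
          have hz0 : ((0:ℝ):ℂ) * (Real.cos β : ℂ) * Complex.exp (I * β) = 0 := by simp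
          rw [← hteq, hz0] at hcl
          obtain ⟨w, hwS, hwd⟩ := Metric.mem_closure_iff.mp hcl (Real.cos θ) hcosθpos
          refine hwS.2 (small_mem_reflStolz h1 (by linarith) hwS.1 ?_)
          rwa [dist_comm, dist_eq, sub_zero] at hwd
        · obtain ⟨harg, hre⟩ := gamma_point_arg hβpos h3 htpos
          exact not_mem_closure_sector hre (by rw [harg, abs_of_pos hβpos]; exact h2)
            (hsub hcl)
      · rcases eq_or_lt_of_le ht.1 with hteq | htpos
        · have hz0 : ((0:ℝ):ℂ) * (Real.cos β : ℂ) * Complex.exp (-(I * β)) = 0 := by simp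
          rw [← hteq, hz0] at hcl
          obtain ⟨w, hwS, hwd⟩ := Metric.mem_closure_iff.mp hcl (Real.cos θ) hcosθpos
          refine hwS.2 (small_mem_reflStolz h1 (by linarith) hwS.1 ?_)
          rwa [dist_comm, dist_eq, sub_zero] at hwd
        · obtain ⟨harg, hre⟩ := gamma_point_arg' hβpos h3 htpos
          refine not_mem_closure_sector hre ?_ (hsub hcl)
          rw [harg, abs_neg, abs_of_pos hβpos]; exact h2
    have hne : (gammaOne β).Nonempty := by
      refine ⟨0, Or.inl ⟨0, Set.left_mem_Icc.mpr zero_le_one, by simp⟩⟩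
    obtain ⟨z₀, hz₀, hmin⟩ := (gammaOne_compact β).exists_isMinOn hne
      ((Metric.continuous_infDist_pt S).continuousOn)
    refine ⟨Metric.infDist z₀ S, ?_, fun z hz w hw =>
      le_trans (hmin hz) (Metric.infDist_le_dist_of_mem hw)⟩
    have : Metric.infDist z₀ S ≠ 0 := fun hc =>
      hnot z₀ hz₀ ((Metric.mem_closure_iff_infDist_zero hS).mpr hc)
    exact lt_of_le_of_ne Metric.infDist_nonneg (Ne.symm this)
  · exact ⟨1, one_pos, fun z _ w hw => absurd ⟨w, hw⟩ hS⟩
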